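/- There is a constant c > 0 such that for all integers m ≥ 2 and n ≥ max(m,3), the partial function dot_m : S² ⇀ S — defined exactly on pairs (i,j) with j ∈ {0,1}, with dot_m(i,0) = 0 and dot_m(i,1) = i — can be simulated through n-colorings by a finite simple graph with at most c·n³ vertices and at most c·n⁴ edges. -/

import Mathlib

/-- A proper `n`-coloring of a simple graph: adjacent vertices get different colors. -/
def IsProperColoring {V : Type} (G : SimpleGraph V) {n : ℕ} (σ : V → Fin n) : Prop :=
  ∀ ⦃u v : V⦄, G.Adj u v → σ u ≠ σ v

/-- The graph `G`, with input vertices `x`, output vertices `y` and reference vertices `r`,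
simulates the partial function `φ : S^p ⇀ S^q` (encoded via `Option`) through `n`-colorings,
where `S = {0,…,m-1}` is identified with the first `m` colors of `C = {0,…,n-1}`. -/
def Simulates {V : Type} (G : SimpleGraph V) (m n : ℕ) {p q : ℕ}
    (φ : (Fin p → Fin m) → Option (Fin q → Fin m))
    (x : Fin p → V) (y : Fin q → V) (r : Fin n → V) : Prop :=
  Function.Injective r ∧
  (∃ σ : V → Fin n, IsProperColoring G σ) ∧
  (∀ σ : V → Fin n, IsProperColoring G σ → Function.Injective fun i => σ (r i)) ∧
  ∀ a : Fin p → Fin n,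
    ((∃ σ : V → Fin n, IsProperColoring G σ ∧ (∀ i, σ (r i) = i) ∧ ∀ j, σ (x j) = a j) ↔
      ∃ a' : Fin p → Fin m, (∀ j, (a j : ℕ) = (a' j : ℕ)) ∧ (φ a').isSome) ∧
    (∀ σ τ : V → Fin n, IsProperColoring G σ → IsProperColoring G τ →
      (∀ i, σ (r i) = i) → (∀ i, τ (r i) = i) →
      (∀ j, σ (x j) = a j) → (∀ j, τ (x j) = a j) → σ = τ) ∧
    (∀ σ : V → Fin n, IsProperColoring G σ → (∀ i, σ (r i) = i) → (∀ j, σ (x j) = a j) →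
      ∀ (a' : Fin p → Fin m) (b : Fin q → Fin m),
        (∀ j, (a j : ℕ) = (a' j : ℕ)) → φ a' = some b →
        ∀ k, (σ (y k) : ℕ) = (b k : ℕ))

set_option maxHeartbeats 2000000

namespace S10

inductive Role | x0 | x1 | t | p | q | y
deriving DecidableEq

instance : Fintype Role :=
  ⟨{.x0, .x1, .t, .p, .q, .y}, by intro x; cases x <;> decide⟩

inductive Kind | K | H | A
deriving DecidableEq

instance : Fintype Kind :=
  ⟨{.K, .H, .A}, by intro x; cases x <;> decide⟩

abbrev Gad (n : ℕ) := Role ⊕ (Fin n × Kind)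
abbrev Vtx (n : ℕ) := Fin n ⊕ Gad n

/-- which reference colors are forbidden for gadget vertex `w` -/
def refRel (m : ℕ) {n : ℕ} (w : Gad n) (i : Fin n) : Prop :=
  match w with
  | .inl .x0 => m ≤ i.val
  | .inl .x1 => 2 ≤ i.val
  | .inl .t => 2 ≤ i.val
  | .inl .p => i.val ≠ 0 ∧ i.val ≠ 2
  | .inl .q => i.val ≠ 1 ∧ i.val ≠ 2
  | .inl .y => False
  | .inr (c, .K) => if c.val = 0 then i.val ≠ 2 else (i.val ≠ 0 ∧ i.val ≠ c.val)
  | .inr (c, .H) => if c.val = 0 then i.val ≠ 2 else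
      if c.val = 1 then 3 ≤ i.val else (i.val ≠ 0 ∧ i.val ≠ 1 ∧ i.val ≠ c.val)
  | .inr (c, .A) => if c.val = 0 then i.val ≠ 2 else
      if c.val = 1 then 2 ≤ i.val else (i.val ≠ 0 ∧ i.val ≠ c.val)

/-- edges among gadget vertices -/
def gRel {n : ℕ} : Gad n → Gad n → Prop := fun w w' =>
  match w, w' with
  | .inl .t, .inl .x1 => True
  | .inl .p, .inl .t => True
  | .inl .q, .inl .t => True
  | .inl .q, .inl .p => True
  | .inr (c, .K), .inr (c', .K) => c.val ≠ 0 ∧ c'.val ≠ 0 ∧ c.val ≠ c'.val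
  | .inr (c, .H), .inr (c', .K) => c.val = c'.val ∧ c.val ≠ 0
  | .inr (c, .A), .inr (c', .H) => c.val = c'.val ∧ c.val ≠ 0
  | .inr (c, .K), .inl .x0 => c.val ≠ 0
  | .inr (c, .H), .inl .x1 => 2 ≤ c.val
  | .inr (c, .A), .inl .x1 => 2 ≤ c.val
  | .inr (c, .H), .inl .p => c.val = 1
  | .inr (c, .A), .inl .p => c.val = 1
  | .inl .y, .inr (c, .A) => c.val ≠ 0
  | _, _ => False

def rel (m : ℕ) {n : ℕ} : Vtx n → Vtx n → Prop
  | .inl _, .inl _ => True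
  | .inl i, .inr w => refRel m w i
  | .inr _, .inl _ => False
  | .inr w, .inr w' => gRel w w'

def Gr (m n : ℕ) : SimpleGraph (Vtx n) := SimpleGraph.fromRel (rel m)

/-- the expected (forced) coloring, in ℕ, given input values a0 a1 -/
def colN (a0 a1 : ℕ) {n : ℕ} : Vtx n → ℕ
  | .inl i => i.val
  | .inr (.inl .x0) => a0
  | .inr (.inl .x1) => a1
  | .inr (.inl .t) => 1 - a1
  | .inr (.inl .p) => if a1 = 1 then 2 else 0
  | .inr (.inl .q) => if a1 = 1 then 1 else 2
  | .inr (.inl .y) => if a1 = 1 then a0 else 0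
  | .inr (.inr (c, .K)) => if c.val = 0 then 2 else (if a0 = c.val then 0 else c.val)
  | .inr (.inr (c, .H)) => if c.val = 0 then 2 else
      if c.val = 1 then (if a1 = 1 then (if a0 = 1 then 1 else 0) else 2)
      else (if a1 = 1 then (if a0 = c.val then c.val else 0) else 1)
  | .inr (.inr (c, .A)) => if c.val = 0 then 2 else
      (if a1 = 1 ∧ a0 = c.val then 0 else c.val)

lemma colN_lt {n a0 a1 : ℕ} (h3 : 3 ≤ n) (ha0 : a0 < n) (ha1 : a1 < 2) :
    ∀ v : Vtx n, colN a0 a1 v < n := by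
  intro v
  rcases v with i | w
  · exact i.isLt
  · rcases w with r | ⟨c, k⟩
    · cases r <;> simp only [colN] <;> (try split_ifs) <;> omega
    · have := c.isLt
      cases k <;> simp only [colN] <;> split_ifs <;> omega

lemma proper_aux {m n a0 a1 : ℕ} (hmn : m ≤ n) (h3 : 3 ≤ n)
    (ha0 : a0 < m) (ha1 : a1 < 2) :
    ∀ u v : Vtx n, rel m u v → u ≠ v → colN a0 a1 u ≠ colN a0 a1 v := by
  intro u v hrel hne
  rcases u with i | w <;> rcases v with i' | w'
  · simp only [colN]
    intro h
    exact hne (congrArg Sum.inl (Fin.ext h))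
  · rcases w' with r | ⟨c, k⟩
    · cases r <;>
        simp only [rel, refRel, colN] at hrel ⊢ <;> (try split_ifs) <;> omega
    · have hc := c.isLt
      cases k <;> simp only [rel, refRel, colN] at hrel ⊢ <;>
        split_ifs at hrel ⊢ <;> omega
  · exact absurd hrel (by simp [rel])
  · rcases w with r | ⟨c, k⟩ <;> rcases w' with r' | ⟨c', k'⟩
    · cases r <;> cases r' <;>
        simp only [rel, gRel, colN] at hrel ⊢ <;> (try split_ifs) <;> omega
    · cases r <;> cases k' <;> simp only [rel, gRel, colN] at hrel ⊢ <;>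
        (try split_ifs) <;> omega
    · cases r' <;> cases k <;> simp only [rel, gRel, colN] at hrel ⊢ <;>
        (try split_ifs) <;> omega
    · cases k <;> cases k' <;> simp only [rel, gRel, colN] at hrel ⊢ <;>
        (try split_ifs) <;> omega

section
variable {m n : ℕ}

def vX0 : Vtx n := .inr (.inl .x0)
def vX1 : Vtx n := .inr (.inl .x1)
def vT : Vtx n := .inr (.inl .t)
def vP : Vtx n := .inr (.inl .p)
def vQ : Vtx n := .inr (.inl .q)
def vY : Vtx n := .inr (.inl .y)
def vK (c : Fin n) : Vtx n := .inr (.inr (c, .K))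
def vH (c : Fin n) : Vtx n := .inr (.inr (c, .H))
def vA (c : Fin n) : Vtx n := .inr (.inr (c, .A))

lemma IsProper_def {σ : Vtx n → Fin n} (hσ : IsProperColoring (Gr m n) σ)
    {u v : Vtx n} (h : rel m u v) (hne : u ≠ v) : σ u ≠ σ v :=
  hσ ((SimpleGraph.fromRel_adj (rel m) u v).mpr ⟨hne, Or.inl h⟩)

variable (σ : Vtx n → Fin n) (hσ : IsProperColoring (Gr m n) σ)
    (hr : ∀ i : Fin n, σ (.inl i) = i)

include hσ hr in
lemma allow (w : Gad n) : ¬ refRel m w (σ (.inr w)) := by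
  intro h
  have hadj : σ (Sum.inl (σ (Sum.inr w))) ≠ σ (.inr w) :=
    IsProper_def hσ (u := Sum.inl (σ (Sum.inr w))) (v := .inr w) h (by simp)
  rw [hr] at hadj
  exact hadj rfl

include hσ in
lemma gadNe (w w' : Gad n) (h : gRel w w') (hne : w ≠ w') :
    (σ (.inr w)).val ≠ (σ (.inr w')).val := by
  intro hv
  exact IsProper_def hσ (u := Sum.inr w) (v := .inr w') h (by simpa using hne) (Fin.ext hv)

include hσ hr in
lemma pins_bound : (σ (vX0 : Vtx n)).val < m ∧ (σ (vX1 : Vtx n)).val < 2 := by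
  have h0 := allow σ hσ hr (.inl .x0)
  have h1 := allow σ hσ hr (.inl .x1)
  simp only [refRel] at h0 h1
  simp only [vX0, vX1]
  exact ⟨by omega, by omega⟩

include hσ hr in
lemma forced (hmn : m ≤ n) (h3 : 3 ≤ n) {a0 a1 : ℕ}
    (ha0 : a0 < m) (ha1 : a1 < 2)
    (hx0 : (σ (vX0 : Vtx n)).val = a0) (hx1 : (σ (vX1 : Vtx n)).val = a1) :
    ∀ v : Vtx n, (σ v).val = colN a0 a1 v := by
  simp only [vX0] at hx0
  simp only [vX1] at hx1
  -- T
  have hT : (σ (.inr (.inl .t) : Vtx n)).val = 1 - a1 := by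
    have hal := allow σ hσ hr (.inl .t)
    have hne := gadNe σ hσ (.inl .t) (.inl .x1) (by simp [gRel]) (by simp)
    simp only [refRel] at hal
    omega
  -- P and Q
  have hPQ : (σ (.inr (.inl .p) : Vtx n)).val = (if a1 = 1 then 2 else 0) ∧
      (σ (.inr (.inl .q) : Vtx n)).val = (if a1 = 1 then 1 else 2) := by
    have halP := allow σ hσ hr (.inl .p)
    have halQ := allow σ hσ hr (.inl .q)
    have hpt := gadNe σ hσ (.inl .p) (.inl .t) (by simp [gRel]) (by simp)
    have hqt := gadNe σ hσ (.inl .q) (.inl .t) (by simp [gRel]) (by simp)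
    have hqp := gadNe σ hσ (.inl .q) (.inl .p) (by simp [gRel]) (by simp)
    simp only [refRel] at halP halQ
    split_ifs <;> omega
  -- K
  have hK : ∀ c : Fin n, c.val ≠ 0 →
      (σ (.inr (.inr (c, .K)) : Vtx n)).val = (if a0 = c.val then 0 else c.val) := by
    have key : ∀ c : Fin n, c.val ≠ 0 → (σ (.inr (.inr (c, .K)) : Vtx n)).val = 0 ∨
        (σ (.inr (.inr (c, .K)) : Vtx n)).val = c.val := by
      intro c hc
      have hal := allow σ hσ hr (.inr (c, .K))
      simp only [refRel, if_neg hc] at hal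
      omega
    have keyx : ∀ c : Fin n, c.val ≠ 0 → (σ (.inr (.inr (c, .K)) : Vtx n)).val ≠ a0 := by
      intro c hc
      have h := gadNe σ hσ (.inr (c, .K)) (.inl .x0) (by exact hc) (by simp)
      omega
    intro c hc
    rcases eq_or_ne a0 c.val with he | he
    · rw [if_pos he]
      rcases key c hc with h | h
      · exact h
      · exact absurd (h.trans he.symm) (keyx c hc)
    · rw [if_neg he]
      rcases eq_or_ne a0 0 with h0 | h0
      · rcases key c hc with h | h
        · exact absurd (h.trans h0.symm) (keyx c hc)
        · exact h
      · set ca : Fin n := ⟨a0, lt_of_lt_of_le ha0 hmn⟩ with hca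
        have hca0 : ca.val ≠ 0 := h0
        have hka : (σ (.inr (.inr (ca, .K)) : Vtx n)).val = 0 := by
          rcases key ca hca0 with h | h
          · exact h
          · exact absurd h (keyx ca hca0)
        have hcl := gadNe σ hσ (.inr (c, .K)) (.inr (ca, .K))
          (by exact ⟨hc, hca0, by simpa [hca] using (Ne.symm he)⟩)
          (by simp only [ne_eq, Sum.inr.injEq, Prod.mk.injEq, and_true]
              intro h
              exact he (by rw [h]))
        rcases key c hc with h | h
        · omega
        · exact h
  -- H and A for c ≥ 2
  have hHA2 : ∀ c : Fin n, 2 ≤ c.val →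
      ((σ (.inr (.inr (c, .H)) : Vtx n)).val =
          (if a1 = 1 then (if a0 = c.val then c.val else 0) else 1) ∧
       (σ (.inr (.inr (c, .A)) : Vtx n)).val = (if a1 = 1 ∧ a0 = c.val then 0 else c.val)) := by
    intro c hc
    have hc0 : c.val ≠ 0 := by omega
    have hc1 : c.val ≠ 1 := by omega
    have halH := allow σ hσ hr (.inr (c, .H))
    have halA := allow σ hσ hr (.inr (c, .A))
    simp only [refRel, if_neg hc0, if_neg hc1] at halH halA
    have hHK := gadNe σ hσ (.inr (c, .H)) (.inr (c, .K)) (by exact ⟨rfl, hc0⟩)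
      (by simp)
    have hHx := gadNe σ hσ (.inr (c, .H)) (.inl .x1) (by exact hc) (by simp)
    have hAx := gadNe σ hσ (.inr (c, .A)) (.inl .x1) (by exact hc) (by simp)
    have hAH := gadNe σ hσ (.inr (c, .A)) (.inr (c, .H)) (by exact ⟨rfl, hc0⟩)
      (by simp)
    have hKc := hK c hc0
    constructor <;> split_ifs at hKc ⊢ <;> omega
  -- H and A for c = 1
  have hHA1 : ∀ c : Fin n, c.val = 1 →
      ((σ (.inr (.inr (c, .H)) : Vtx n)).val =
          (if a1 = 1 then (if a0 = 1 then 1 else 0) else 2) ∧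
       (σ (.inr (.inr (c, .A)) : Vtx n)).val = (if a1 = 1 ∧ a0 = 1 then 0 else 1)) := by
    intro c hc
    have hc0 : c.val ≠ 0 := by omega
    have halH := allow σ hσ hr (.inr (c, .H))
    have halA := allow σ hσ hr (.inr (c, .A))
    simp only [refRel, if_neg hc0, if_pos hc] at halH halA
    have hHK := gadNe σ hσ (.inr (c, .H)) (.inr (c, .K)) (by exact ⟨rfl, hc0⟩)
      (by simp)
    have hHp := gadNe σ hσ (.inr (c, .H)) (.inl .p) (by exact hc) (by simp)
    have hAp := gadNe σ hσ (.inr (c, .A)) (.inl .p) (by exact hc) (by simp)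
    have hAH := gadNe σ hσ (.inr (c, .A)) (.inr (c, .H)) (by exact ⟨rfl, hc0⟩)
      (by simp)
    have hKc := hK c hc0
    rw [hc] at hKc
    obtain ⟨hPv, -⟩ := hPQ
    constructor <;> split_ifs at hKc hPv ⊢ <;> omega
  -- unified A
  have hA : ∀ c : Fin n, c.val ≠ 0 →
      (σ (.inr (.inr (c, .A)) : Vtx n)).val = (if a1 = 1 ∧ a0 = c.val then 0 else c.val) := by
    intro c hc
    rcases eq_or_ne c.val 1 with h1 | h1
    · rw [(hHA1 c h1).2, h1]
    · exact (hHA2 c (by omega)).2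
  -- Y
  have hY : (σ (.inr (.inl .y) : Vtx n)).val = (if a1 = 1 then a0 else 0) := by
    have hYA : ∀ c : Fin n, c.val ≠ 0 →
        (σ (.inr (.inl .y) : Vtx n)).val ≠ (σ (.inr (.inr (c, .A)) : Vtx n)).val := by
      intro c hc
      exact gadNe σ hσ (.inl .y) (.inr (c, .A)) (by exact hc) (by simp)
    set s := (σ (.inr (.inl .y) : Vtx n)).val with hs
    have hsn : s < n := (σ (.inr (.inl .y) : Vtx n)).isLt
    rcases eq_or_ne a1 1 with h1 | h1
    · rw [if_pos h1]
      by_contra hne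
      rcases eq_or_ne s 0 with h0 | h0
      · have ha0n : a0 ≠ 0 := by omega
        have h := hYA ⟨a0, lt_of_lt_of_le ha0 hmn⟩ ha0n
        rw [hA ⟨a0, lt_of_lt_of_le ha0 hmn⟩ ha0n] at h
        rw [if_pos (⟨h1, rfl⟩ : a1 = 1 ∧ a0 = (⟨a0, lt_of_lt_of_le ha0 hmn⟩ : Fin n).val)] at h
        omega
      · have h := hYA ⟨s, hsn⟩ h0
        rw [hA ⟨s, hsn⟩ h0] at h
        have hcond : ¬ (a1 = 1 ∧ a0 = s) := fun hcnd => hne hcnd.2.symm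
        rw [if_neg hcond] at h
        exact h rfl
    · rw [if_neg h1]
      by_contra hne
      have h := hYA ⟨s, hsn⟩ hne
      rw [hA ⟨s, hsn⟩ hne] at h
      rw [if_neg (by tauto)] at h
      exact h rfl
  -- assemble
  intro v
  rcases v with i | w
  · simp only [colN]
    rw [hr]
  · rcases w with r | ⟨c, k⟩
    · cases r
      · simpa [colN] using hx0
      · simpa [colN] using hx1
      · simpa [colN] using hT
      · simpa [colN] using hPQ.1
      · simpa [colN] using hPQ.2
      · simpa [colN] using hY
    · rcases eq_or_ne c.val 0 with hc | hc
      · have hal := allow σ hσ hr (.inr (c, k))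
        cases k <;> simp only [refRel, if_pos hc] at hal <;>
          simp only [colN, if_pos hc] <;> omega
      · cases k
        · simpa [colN, if_neg hc] using hK c hc
        · rcases eq_or_ne c.val 1 with h1 | h1
          · have := (hHA1 c h1).1
            simp only [colN, if_neg hc, if_pos h1]
            simpa [h1] using this
          · have := (hHA2 c (by omega)).1
            simp only [colN, if_neg hc, if_neg h1]
            exact this
        · simpa [colN, if_neg hc] using hA c hc

include hσ hr in
lemma pin_x0 (i : Fin n) (him : m ≤ i.val) : σ (vX0 : Vtx n) ≠ i := by
  intro h
  exact absurd (h ▸ (pins_bound σ hσ hr).1) (by omega)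

end

lemma proper_colF {m n : ℕ} (hmn : m ≤ n) (h3 : 3 ≤ n) {a0 a1 : ℕ}
    (ha0 : a0 < m) (ha1 : a1 < 2) :
    IsProperColoring (Gr m n)
      (fun v => (⟨colN a0 a1 v, colN_lt h3 (lt_of_lt_of_le ha0 hmn) ha1 v⟩ : Fin n)) := by
  intro u v hadj
  rw [Gr, SimpleGraph.fromRel_adj] at hadj
  obtain ⟨hne, h | h⟩ := hadj
  · intro he
    exact proper_aux hmn h3 ha0 ha1 u v h hne (congrArg Fin.val he)
  · intro he
    exact proper_aux hmn h3 ha0 ha1 v u h hne.symm (congrArg Fin.val he).symm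

end S10


open S10

/-- There is a constant `c > 0` such that for all `m ≥ 2` and `n ≥ max(m,3)`, the partial
function `dot_m : S² ⇀ S` — defined exactly on pairs `(i,j)` with `j ∈ {0,1}`, where
`dot_m(i,0) = 0` and `dot_m(i,1) = i` — can be simulated through `n`-colorings by a finite
simple graph with at most `c·n³` vertices and `c·n⁴` edges. -/
theorem statement10 :
    ∃ c : ℕ, 0 < c ∧
      ∀ m n : ℕ, (hm : 2 ≤ m) → max m 3 ≤ n →
        ∃ (V : Type) (_ : Fintype V) (G : SimpleGraph V)
          (x : Fin 2 → V) (y : Fin 1 → V) (r : Fin n → V),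
          Simulates G m n
            (fun a : Fin 2 → Fin m =>
              if (a 1 : ℕ) = 0 then some fun _ : Fin 1 => (⟨0, by omega⟩ : Fin m)
              else if (a 1 : ℕ) = 1 then some fun _ : Fin 1 => a 0
              else none)
            x y r ∧
          Nat.card V ≤ c * n ^ 3 ∧ Nat.card G.edgeSet ≤ c * n ^ 4 := by
  refine ⟨100, by norm_num, ?_⟩
  intro m n hm hmax
  have h3 : 3 ≤ n := le_trans (le_max_right m 3) hmax
  have hmn : m ≤ n := le_trans (le_max_left m 3) hmax
  refine ⟨Vtx n, inferInstance, Gr m n, ![vX0, vX1], fun _ => vY, fun i => Sum.inl i,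
    ⟨?_, ?_, ?_, ?_⟩, ?_, ?_⟩
  · exact fun a b h => Sum.inl_injective h
  · exact ⟨_, proper_colF (a0 := 0) (a1 := 0) hmn h3 (by omega) (by omega)⟩
  · intro σ hσ i j h
    by_contra hne
    exact IsProper_def hσ (u := Sum.inl i) (v := Sum.inl j) trivial
      (fun hh => hne (Sum.inl_injective hh)) h
  · intro a
    have hx0e : (![vX0, vX1] : Fin 2 → Vtx n) 0 = vX0 := rfl
    have hx1e : (![vX0, vX1] : Fin 2 → Vtx n) 1 = vX1 := rfl
    refine ⟨⟨?_, ?_⟩, ?_, ?_⟩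
    · -- forward of iff
      rintro ⟨σ, hσ, hpin, hx⟩
      have hb := pins_bound σ hσ hpin
      have e0 := hx 0
      have e1 := hx 1
      rw [hx0e] at e0
      rw [hx1e] at e1
      have h0 : (a 0).val < m := by rw [← e0]; exact hb.1
      have h1 : (a 1).val < 2 := by rw [← e1]; exact hb.2
      refine ⟨![⟨(a 0).val, h0⟩, ⟨(a 1).val, by omega⟩], ?_, ?_⟩
      · rw [Fin.forall_fin_two]
        exact ⟨rfl, rfl⟩
      · rcases (by omega : (a 1).val = 0 ∨ (a 1).val = 1) with h | h <;>
          simp [Matrix.cons_val_one, Matrix.head_cons, h]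
    · -- backward of iff
      rintro ⟨a', hvals, hsome⟩
      have h0 : (a 0).val < m := by rw [hvals 0]; exact (a' 0).isLt
      have h1 : (a 1).val < 2 := by
        rw [hvals 1]
        by_contra hge
        have hne0 : ((a' 1 : ℕ)) ≠ 0 := by omega
        have hne1 : ((a' 1 : ℕ)) ≠ 1 := by omega
        simp [hne0, hne1] at hsome
      refine ⟨fun v => ⟨colN (a 0).val (a 1).val v,
          colN_lt h3 (lt_of_lt_of_le h0 hmn) h1 v⟩,
        proper_colF hmn h3 h0 h1, fun i => Fin.ext rfl, ?_⟩
      rw [Fin.forall_fin_two]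
      constructor
      · rw [hx0e]; exact Fin.ext rfl
      · rw [hx1e]; exact Fin.ext rfl
    · -- uniqueness
      intro σ τ hσ hτ hrσ hrτ hxσ hxτ
      have hbσ := pins_bound σ hσ hrσ
      have hbτ := pins_bound τ hτ hrτ
      have eσ0 := hxσ 0; have eσ1 := hxσ 1
      have eτ0 := hxτ 0; have eτ1 := hxτ 1
      rw [hx0e] at eσ0 eτ0
      rw [hx1e] at eσ1 eτ1
      have h0 : (a 0).val < m := by rw [← eσ0]; exact hbσ.1
      have h1 : (a 1).val < 2 := by rw [← eσ1]; exact hbσ.2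
      funext v
      have Fσ := forced σ hσ hrσ hmn h3 h0 h1 (by rw [eσ0]) (by rw [eσ1]) v
      have Fτ := forced τ hτ hrτ hmn h3 h0 h1 (by rw [eτ0]) (by rw [eτ1]) v
      exact Fin.ext (Fσ.trans Fτ.symm)
    · -- output values
      intro σ hσ hpin hx a' b hvals hφ k
      replace hφ : (if ((a' 1 : ℕ)) = 0 then some (fun _ : Fin 1 => (⟨0, by omega⟩ : Fin m))
          else if ((a' 1 : ℕ)) = 1 then some (fun _ : Fin 1 => a' 0) else none) = some b := hφ
      have hb := pins_bound σ hσ hpin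
      have e0 := hx 0; have e1 := hx 1
      rw [hx0e] at e0
      rw [hx1e] at e1
      have h0 : (a 0).val < m := by rw [← e0]; exact hb.1
      have h1 : (a 1).val < 2 := by rw [← e1]; exact hb.2
      have F := forced σ hσ hpin hmn h3 h0 h1 (by rw [e0]) (by rw [e1])
      have FY := F vY
      simp only [vY, colN] at FY
      have hv1 : (a 1 : ℕ) = (a' 1 : ℕ) := hvals 1
      rcases (by omega : (a 1).val = 0 ∨ (a 1).val = 1) with h | h
      · rw [if_neg (by omega : ¬ (a 1).val = 1)] at FY
        rw [if_pos (by omega : ((a' 1 : ℕ)) = 0)] at hφ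
        have hb' : b = fun _ : Fin 1 => (⟨0, by omega⟩ : Fin m) := (Option.some_injective _ hφ).symm
        rw [hb']
        show (σ (Sum.inr (Sum.inl Role.y) : Vtx n)).val = 0
        exact FY
      · rw [if_pos (by omega : (a 1).val = 1)] at FY
        rw [if_neg (by omega : ¬ ((a' 1 : ℕ)) = 0), if_pos (by omega : ((a' 1 : ℕ)) = 1)] at hφ
        have hb' : b = fun _ : Fin 1 => a' 0 := (Option.some_injective _ hφ).symm
        rw [hb']
        show (σ (Sum.inr (Sum.inl Role.y) : Vtx n)).val = (a' 0).val
        rw [FY]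
        exact hvals 0
  · -- vertex count
    have hcard : Nat.card (Vtx n) = n + (6 + n * 3) := by
      rw [Nat.card_eq_fintype_card]
      simp [Fintype.card_sum, Fintype.card_prod]
      rfl
    rw [hcard]
    have hA : n + (6 + n * 3) ≤ 6 * n := by omega
    exact le_trans hA (Nat.mul_le_mul (by norm_num) (Nat.le_self_pow (by norm_num) n))
  · -- edge count
    have hle : Nat.card (Gr m n).edgeSet ≤ Nat.card (Vtx n × Vtx n) := by
      apply Nat.card_le_card_of_injective (f := fun e : (Gr m n).edgeSet => Quot.out e.1)
      intro e1 e2 h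
      apply Subtype.ext
      rw [← Quot.out_eq e1.1, ← Quot.out_eq e2.1]
      exact congrArg _ h
    have hcard : Nat.card (Vtx n) = n + (6 + n * 3) := by
      rw [Nat.card_eq_fintype_card]
      simp [Fintype.card_sum, Fintype.card_prod]
      rfl
    rw [Nat.card_prod, hcard] at hle
    have hA : n + (6 + n * 3) ≤ 6 * n := by omega
    refine le_trans hle (le_trans (Nat.mul_le_mul hA hA) ?_)
    have heq : 6 * n * (6 * n) = 36 * n ^ 2 := by ring
    rw [heq]
    have h24 : n ^ 2 ≤ n ^ 4 := Nat.pow_le_pow_right (by omega) (by norm_num)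
    calc 36 * n ^ 2 ≤ 100 * n ^ 4 := by
          have := Nat.mul_le_mul (show (36:ℕ) ≤ 100 by norm_num) h24
          simpa using this
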